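/- Let A be an n×n real matrix all of whose complex eigenvalues have strictly negative real part. Then A is invertible, the function s ↦ exp(sA) (matrix exponential) is integrable on [0, ∞), and ∫₀^∞ exp(sA) ds = −A⁻¹. -/

import Mathlib

open Matrix MeasureTheory

section AuxLinfty

attribute [local instance] Matrix.linftyOpNormedRing Matrix.linftyOpNormedAlgebra
  Matrix.linftyOpNormedSpace

noncomputable local instance {n : Type*} [Fintype n] : CompleteSpace (Matrix n n ℝ) :=
  inferInstanceAs (CompleteSpace (n → n → ℝ))

noncomputable local instance {n : Type*} [Fintype n] : CompleteSpace (Matrix n n ℂ) :=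
  inferInstanceAs (CompleteSpace (n → n → ℂ))

variable {n : Type*} [Fintype n] [DecidableEq n]

private lemma aux_mem_spectrum_iff_eig {M : Matrix n n ℂ} {μ : ℂ} :
    μ ∈ spectrum ℂ M ↔ Module.End.HasEigenvalue (Matrix.toLin' M) μ := by
  rw [← AlgEquiv.spectrum_eq (Matrix.toLinAlgEquiv' : Matrix n n ℂ ≃ₐ[ℂ] _) M,
      Module.End.hasEigenvalue_iff_mem_spectrum]
  rfl

private lemma aux_exp_mulVec_eigen (B : Matrix n n ℂ) {v : n → ℂ} {l : ℂ}
    (hv : B *ᵥ v = l • v) :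
    NormedSpace.exp B *ᵥ v = Complex.exp l • v := by
  have hpow : ∀ k : ℕ, B ^ k *ᵥ v = l ^ k • v := by
    intro k
    induction k with
    | zero => simp
    | succ k ih =>
        rw [pow_succ', pow_succ', ← Matrix.mulVec_mulVec, ih, Matrix.mulVec_smul, hv,
          smul_smul, mul_comm]
  let L : Matrix n n ℂ →ₗ[ℂ] (n → ℂ) :=
    { toFun := fun M => M *ᵥ v
      map_add' := fun M N => Matrix.add_mulVec M N v
      map_smul' := fun c M => Matrix.smul_mulVec c M v }
  let Lc : Matrix n n ℂ →L[ℂ] (n → ℂ) := LinearMap.toContinuousLinearMap L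
  have hsum : Summable fun k : ℕ => (k.factorial⁻¹ : ℂ) • B ^ k :=
    NormedSpace.expSeries_summable' (𝕂 := ℂ) B
  have h1 : NormedSpace.exp B *ᵥ v = Lc (∑' k : ℕ, (k.factorial⁻¹ : ℂ) • B ^ k) := by
    rw [NormedSpace.exp_eq_tsum ℂ]
    rfl
  rw [h1, Lc.map_tsum hsum]
  have h2 : ∀ k : ℕ, Lc ((k.factorial⁻¹ : ℂ) • B ^ k) = ((k.factorial⁻¹ : ℂ) * l ^ k) • v := by
    intro k
    rw [_root_.map_smul]
    show (k.factorial⁻¹ : ℂ) • (B ^ k *ᵥ v) = _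
    rw [hpow k, smul_smul]
  rw [tsum_congr h2]
  rw [Summable.tsum_smul_const]
  · congr 1
    rw [Complex.exp_eq_exp_ℂ, NormedSpace.exp_eq_tsum ℂ]
    simp [smul_eq_mul]
  · exact (NormedSpace.expSeries_summable' (𝕂 := ℂ) l).congr fun k => by simp [smul_eq_mul]

private lemma aux_spectrum_exp_subset (B : Matrix n n ℂ) {μ : ℂ}
    (hμ : μ ∈ spectrum ℂ (NormedSpace.exp B)) :
    ∃ l ∈ spectrum ℂ B, μ = Complex.exp l := by
  rw [aux_mem_spectrum_iff_eig] at hμ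
  set W : Submodule ℂ (n → ℂ) := Module.End.eigenspace (Matrix.toLin' (NormedSpace.exp B)) μ
    with hW
  have hWne : Nontrivial W := by
    rw [Submodule.nontrivial_iff_ne_bot]
    exact hμ
  have hcomm : B * NormedSpace.exp B = NormedSpace.exp B * B :=
    ((Commute.refl B).exp_right)
  have hmaps : ∀ x ∈ W, (Matrix.toLin' B) x ∈ W := by
    intro x hx
    rw [hW, Module.End.mem_eigenspace_iff] at hx ⊢
    rw [Matrix.toLin'_apply] at hx ⊢
    rw [Matrix.toLin'_apply, Matrix.mulVec_mulVec, ← hcomm, ← Matrix.mulVec_mulVec, hx,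
      Matrix.mulVec_smul]
  let F : W →ₗ[ℂ] W := (Matrix.toLin' B).restrict hmaps
  obtain ⟨l, hl⟩ := Module.End.exists_eigenvalue F
  obtain ⟨w, hw⟩ := hl.exists_hasEigenvector
  have hw0 : (w : n → ℂ) ≠ 0 := fun h => hw.2 (Subtype.coe_injective h)
  have hBw : B *ᵥ (w : n → ℂ) = l • (w : n → ℂ) := by
    have hw1 := hw.apply_eq_smul
    have h2 : ((F w : W) : n → ℂ) = Matrix.toLin' B (w : n → ℂ) := rfl
    rw [hw1] at h2
    rw [Matrix.toLin'_apply] at h2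
    rw [← h2]
    rfl
  refine ⟨l, ?_, ?_⟩
  · rw [aux_mem_spectrum_iff_eig]
    exact Module.End.hasEigenvalue_of_hasEigenvector
      ⟨Module.End.mem_eigenspace_iff.mpr (by rw [Matrix.toLin'_apply]; exact hBw), hw0⟩
  · have h1 : NormedSpace.exp B *ᵥ (w : n → ℂ) = Complex.exp l • (w : n → ℂ) :=
      aux_exp_mulVec_eigen B hBw
    have h2 : NormedSpace.exp B *ᵥ (w : n → ℂ) = μ • (w : n → ℂ) := by
      have h3 := Module.End.mem_eigenspace_iff.mp w.2
      rw [Matrix.toLin'_apply] at h3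
      exact h3
    have h4 := h1.symm.trans h2
    have hsub : (μ - Complex.exp l) • (w : n → ℂ) = 0 := by
      rw [sub_smul, h4, sub_self]
    rcases smul_eq_zero.mp hsub with h | h
    · exact (sub_eq_zero.mp h)
    · exact absurd h hw0

private lemma aux_exp_decay_complex (B : Matrix n n ℂ) (hB : ∀ z ∈ spectrum ℂ B, z.re < 0) :
    ∃ C > 0, ∃ δ > 0, ∀ s : ℝ, 0 ≤ s → ∀ i j,
      ‖NormedSpace.exp (s • B) i j‖ ≤ C * Real.exp (-δ * s) := by
  rcases isEmpty_or_nonempty n with hn | hn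
  · exact ⟨1, one_pos, 1, one_pos, fun s hs i j => (IsEmpty.elim hn i)⟩
  -- entrywise bound by linfty norm
  have entry_le : ∀ (X : Matrix n n ℂ) (i j : n), ‖X i j‖ ≤ ‖X‖ := by
    intro X i j
    have h1 : ‖X i j‖₊ ≤ ∑ j', ‖X i j'‖₊ :=
      Finset.single_le_sum (f := fun j' => ‖X i j'‖₊) (fun _ _ => zero_le) (Finset.mem_univ j)
    have h2 : (∑ j', ‖X i j'‖₊) ≤ Finset.univ.sup fun i => ∑ j', ‖X i j'‖₊ :=
      Finset.le_sup (f := fun i => ∑ j', ‖X i j'‖₊) (Finset.mem_univ i)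
    have h3 : ‖X i j‖₊ ≤ ‖X‖₊ := by rw [Matrix.linfty_opNNNorm_def]; exact h1.trans h2
    exact h3
  -- spectrum is nonempty
  have hne : (spectrum ℂ B).Nonempty := by
    obtain ⟨l, hl⟩ := Module.End.exists_eigenvalue (Matrix.toLin' B)
    exact ⟨l, aux_mem_spectrum_iff_eig.mpr hl⟩
  -- max real part
  obtain ⟨l0, hl0mem, hl0max⟩ : ∃ l0 ∈ spectrum ℂ B, ∀ l ∈ spectrum ℂ B, l.re ≤ l0.re := by
    obtain ⟨l0, h1, h2⟩ := Finset.exists_max_image (B.finite_spectrum.toFinset) Complex.re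
      (by simpa [Set.Finite.toFinset_nonempty] using hne)
    exact ⟨l0, by simpa using h1, fun l hl => h2 l (by simpa using hl)⟩
  have hl0neg : l0.re < 0 := hB l0 hl0mem
  set δ : ℝ := -(l0.re / 2) with hδ
  have hδpos : 0 < δ := by simp [hδ]; linarith
  set r : ℝ := Real.exp (-δ) with hr
  have hr0 : 0 < r := Real.exp_pos _
  have hr1 : r < 1 := by
    rw [hr, Real.exp_lt_one_iff]; linarith
  -- spectral radius bound
  have key : ∀ μ ∈ spectrum ℂ (NormedSpace.exp B), ‖μ‖ ≤ Real.exp l0.re := by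
    intro μ hμ
    obtain ⟨l, hl, rfl⟩ := aux_spectrum_exp_subset B hμ
    rw [Complex.norm_exp]
    exact Real.exp_le_exp.mpr (hl0max l hl)
  have hρ : spectralRadius ℂ (NormedSpace.exp B) < ENNReal.ofReal r := by
    have h1 : spectralRadius ℂ (NormedSpace.exp B) ≤ ENNReal.ofReal (Real.exp l0.re) := by
      rw [spectralRadius]
      refine iSup₂_le fun μ hμ => ?_
      rw [← ENNReal.ofReal_coe_nnreal, coe_nnnorm]
      exact ENNReal.ofReal_le_ofReal (key μ hμ)
    refine h1.trans_lt ((ENNReal.ofReal_lt_ofReal_iff hr0).mpr ?_)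
    rw [hr, Real.exp_lt_exp, hδ]
    linarith
  -- Gelfand's formula
  have hg := spectrum.pow_nnnorm_pow_one_div_tendsto_nhds_spectralRadius (NormedSpace.exp B)
  have hev : ∀ᶠ m : ℕ in Filter.atTop,
      (‖(NormedSpace.exp B) ^ m‖₊ : ENNReal) ^ (1 / (m : ℝ)) < ENNReal.ofReal r :=
    hg.eventually_lt_const hρ
  obtain ⟨M, hM⟩ := Filter.eventually_atTop.mp (hev.and (Filter.eventually_ge_atTop 1))
  have hpow : ∀ m : ℕ, M ≤ m → ‖(NormedSpace.exp B) ^ m‖ ≤ r ^ m := by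
    intro m hm
    obtain ⟨h1, h2⟩ := hM m hm
    have hm0 : (m : ℝ) ≠ 0 := Nat.cast_ne_zero.mpr (by omega)
    have h3 : ((‖(NormedSpace.exp B) ^ m‖₊ : ENNReal) ^ (1/(m:ℝ))) ^ (m:ℝ)
        < (ENNReal.ofReal r) ^ (m:ℝ) :=
      ENNReal.rpow_lt_rpow h1 (by positivity)
    rw [← ENNReal.rpow_mul, one_div, inv_mul_cancel₀ hm0, ENNReal.rpow_one,
      ENNReal.ofReal_rpow_of_pos hr0, Real.rpow_natCast] at h3
    have h4 : ENNReal.ofReal ‖(NormedSpace.exp B) ^ m‖ < ENNReal.ofReal (r ^ m) := by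
      rwa [← coe_nnnorm, ENNReal.ofReal_coe_nnreal]
    exact le_of_lt ((ENNReal.ofReal_lt_ofReal_iff_of_nonneg (norm_nonneg _)).mp h4)
  -- bound on a compact interval
  have hcont : Continuous fun t : ℝ => NormedSpace.exp (t • B) :=
    NormedSpace.exp_continuous.comp (continuous_id.smul continuous_const)
  obtain ⟨C0, hC0⟩ :=
    (isCompact_Icc (a := (0:ℝ)) (b := (M:ℝ)+1)).exists_bound_of_continuousOn hcont.continuousOn
  set C1 : ℝ := max C0 1 with hC1
  have hC1pos : 0 < C1 := lt_of_lt_of_le one_pos (le_max_right _ _)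
  have hC1b : ∀ t : ℝ, 0 ≤ t → t ≤ (M:ℝ)+1 → ‖NormedSpace.exp (t • B)‖ ≤ C1 :=
    fun t ht1 ht2 => (hC0 t ⟨ht1, ht2⟩).trans (le_max_left _ _)
  have main : ∀ s : ℝ, 0 ≤ s → ‖NormedSpace.exp (s • B)‖ ≤ C1 * r ^ (s - ((M:ℝ)+1)) := by
    intro s hs
    rcases lt_or_ge s ((M:ℝ)+1) with hsM | hsM
    · have h5 : (1:ℝ) ≤ r ^ (s - ((M:ℝ)+1)) :=
        Real.one_le_rpow_of_pos_of_le_one_of_nonpos hr0 hr1.le (by linarith)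
      calc ‖NormedSpace.exp (s • B)‖ ≤ C1 := hC1b s hs hsM.le
        _ ≤ C1 * r ^ (s - ((M:ℝ)+1)) := le_mul_of_one_le_right hC1pos.le h5
    · set m := ⌊s⌋₊ with hm
      have hm_le : (m:ℝ) ≤ s := Nat.floor_le hs
      have hs_lt : s < m + 1 := Nat.lt_floor_add_one s
      have hmM : M ≤ m := by
        have h8 : (M:ℝ) < (m:ℝ) := by linarith
        exact_mod_cast h8.le
      have hsplit : NormedSpace.exp (s • B)
          = NormedSpace.exp ((s - (m:ℝ)) • B) * (NormedSpace.exp B) ^ m := by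
        have hcm : Commute ((s - (m:ℝ)) • B) ((m:ℕ) • B) :=
          ((Commute.refl B).smul_left _).smul_right _
        rw [← Matrix.exp_nsmul, ← Matrix.exp_add_of_commute _ _ hcm]
        congr 1
        rw [← Nat.cast_smul_eq_nsmul ℝ, ← add_smul, sub_add_cancel]
      calc ‖NormedSpace.exp (s • B)‖
          ≤ ‖NormedSpace.exp ((s - (m:ℝ)) • B)‖ * ‖(NormedSpace.exp B) ^ m‖ := by
            rw [hsplit]; exact norm_mul_le _ _
        _ ≤ C1 * r ^ m :=
            mul_le_mul (hC1b _ (by linarith) (by linarith)) (hpow m hmM)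
              (norm_nonneg _) hC1pos.le
        _ ≤ C1 * r ^ (s - ((M:ℝ)+1)) := by
            have h10 : r ^ ((m:ℕ):ℝ) ≤ r ^ (s - ((M:ℝ)+1)) :=
              Real.rpow_le_rpow_of_exponent_ge hr0 hr1.le (by linarith)
            rw [Real.rpow_natCast] at h10
            exact mul_le_mul_of_nonneg_left h10 hC1pos.le
  refine ⟨C1 * r ^ (-((M:ℝ)+1)), by positivity, δ, hδpos, fun s hs i j => ?_⟩
  have h6 := (entry_le _ i j).trans (main s hs)
  have h7 : r ^ (s - ((M:ℝ)+1)) = r ^ (-((M:ℝ)+1)) * Real.exp (-δ * s) := by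
    rw [sub_eq_add_neg, Real.rpow_add hr0, mul_comm]
    congr 1
    rw [hr, ← Real.exp_mul]
  rw [h7, ← mul_assoc] at h6
  exact h6

private lemma aux_exp_map_algebraMap (A : Matrix n n ℝ) (s : ℝ) :
    (NormedSpace.exp (s • A)).map (algebraMap ℝ ℂ)
      = NormedSpace.exp (s • A.map (algebraMap ℝ ℂ)) := by
  have hcont : Continuous ((algebraMap ℝ ℂ).mapMatrix : Matrix n n ℝ →+* Matrix n n ℂ) := by
    show Continuous fun X : Matrix n n ℝ => X.map (algebraMap ℝ ℂ)
    exact continuous_pi fun i => continuous_pi fun j =>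
      (continuous_algebraMap ℝ ℂ).comp ((continuous_apply j).comp (continuous_apply i))
  have h1 := NormedSpace.map_exp ((algebraMap ℝ ℂ).mapMatrix : Matrix n n ℝ →+* Matrix n n ℂ)
    hcont (s • A)
  have h2 : ((algebraMap ℝ ℂ).mapMatrix : Matrix n n ℝ →+* Matrix n n ℂ) (s • A)
      = s • A.map (algebraMap ℝ ℂ) := by
    ext i j
    simp [RingHom.mapMatrix_apply, Matrix.map_apply, Matrix.smul_apply, smul_eq_mul,
      Complex.ofReal_mul]
  have h3 : (NormedSpace.exp : Matrix n n ℂ → Matrix n n ℂ) = NormedSpace.exp :=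
    rfl
  rw [RingHom.mapMatrix_apply] at h1
  rw [h2] at h1
  exact h1

private lemma aux_exp_cont_real (A : Matrix n n ℝ) :
    Continuous fun s : ℝ => NormedSpace.exp (s • A) :=
  NormedSpace.exp_continuous.comp (continuous_id.smul continuous_const)

private lemma aux_exp_tendsto_slope (A : Matrix n n ℝ) (t : ℝ) :
    Filter.Tendsto (slope (fun s : ℝ => NormedSpace.exp (s • A)) t)
      (nhdsWithin t {t}ᶜ) (nhds (NormedSpace.exp (t • A) * A)) := by
  have h := hasDerivAt_exp_smul_const (𝕂 := ℝ) A t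
  rw [hasDerivAt_iff_tendsto_slope] at h
  exact h

end AuxLinfty

attribute [local instance] Matrix.normedAddCommGroup Matrix.normedSpace

noncomputable local instance {n : Type*} [Fintype n] : ContinuousENorm (Matrix n n ℝ) :=
  SeminormedAddGroup.toContinuousENorm

noncomputable local instance {n : Type*} [Fintype n] : CompleteSpace (Matrix n n ℝ) :=
  inferInstanceAs (CompleteSpace (n → n → ℝ))

section AuxPi

variable {n : Type*} [Fintype n] [DecidableEq n]

private lemma aux_exp_real_decay (A : Matrix n n ℝ)
    (hA : ∀ z ∈ spectrum ℂ (A.map (algebraMap ℝ ℂ)), z.re < 0) :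
    ∃ C > 0, ∃ δ > 0, ∀ s : ℝ, 0 ≤ s →
      ‖NormedSpace.exp (s • A)‖ ≤ C * Real.exp (-δ * s) := by
  obtain ⟨C, hC, δ, hδ, hb⟩ := aux_exp_decay_complex (A.map (algebraMap ℝ ℂ)) hA
  refine ⟨C, hC, δ, hδ, fun s hs => ?_⟩
  rw [Matrix.norm_le_iff (by positivity)]
  intro i j
  have h1 := hb s hs i j
  rw [← aux_exp_map_algebraMap] at h1
  simpa [Matrix.map_apply, Complex.norm_real] using h1

private lemma aux_exp_hasDerivAt (A : Matrix n n ℝ) (t : ℝ) :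
    HasDerivAt (fun s : ℝ => NormedSpace.exp (s • A))
      (NormedSpace.exp (t • A) * A) t := by
  refine hasDerivAt_iff_tendsto_slope.mpr ?_
  exact aux_exp_tendsto_slope A t

end AuxPi

/-- if all complex eigenvalues of `A` have strictly negative real part,
then `A` is invertible, `s ↦ exp(sA)` is integrable on `[0, ∞)`, and
`∫₀^∞ exp(sA) ds = -A⁻¹`. -/
theorem integral_exp_eq_neg_inv {n : Type*} [Fintype n] [DecidableEq n]
    (A : Matrix n n ℝ)
    (hA : ∀ z ∈ spectrum ℂ (A.map (algebraMap ℝ ℂ)), z.re < 0) :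
    IsUnit A ∧
    IntegrableOn (fun s : ℝ => NormedSpace.exp (s • A)) (Set.Ici (0:ℝ)) ∧
    ∫ s in Set.Ici (0:ℝ), NormedSpace.exp (s • A) = -A⁻¹ := by
  -- invertibility
  have hdet : A.det ≠ 0 := by
    intro h
    have h0 : ¬ IsUnit (A.map (algebraMap ℝ ℂ)) := by
      rw [Matrix.isUnit_iff_isUnit_det,
        show A.map ⇑(algebraMap ℝ ℂ) = (algebraMap ℝ ℂ).mapMatrix A from rfl,
        ← RingHom.map_det]
      simp [h]
    have := hA 0 (spectrum.zero_mem (R := ℂ) h0)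
    simp at this
  have hU : IsUnit A := (Matrix.isUnit_iff_isUnit_det A).mpr (isUnit_iff_ne_zero.mpr hdet)
  -- the exponential decay bound
  obtain ⟨C, hC, δ, hδ, hb⟩ := aux_exp_real_decay A hA
  have hcont := aux_exp_cont_real A
  -- integrability
  have hint : IntegrableOn (fun s : ℝ => NormedSpace.exp (s • A)) (Set.Ici (0:ℝ)) := by
    refine Integrable.mono' (g := fun s : ℝ => C * Real.exp (-δ * s)) ?_ ?_ ?_
    · exact Iff.mpr integrableOn_Ici_iff_integrableOn_Ioi ((exp_neg_integrableOn_Ioi 0 hδ).const_mul C)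
    · haveI : TopologicalSpace.PseudoMetrizableSpace (Matrix n n ℝ) :=
        inferInstanceAs (TopologicalSpace.PseudoMetrizableSpace (n → n → ℝ))
      exact hcont.aestronglyMeasurable.restrict
    · filter_upwards [ae_restrict_mem measurableSet_Ici] with s hs
      exact hb s hs
  refine ⟨hU, hint, ?_⟩
  -- FTC on [0, ∞)
  have hIoiInt : IntegrableOn (fun s : ℝ => NormedSpace.exp (s • A)) (Set.Ioi (0:ℝ)) :=
    hint.mono_set Set.Ioi_subset_Ici_self
  let R : Matrix n n ℝ →L[ℝ] Matrix n n ℝ :=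
    LinearMap.toContinuousLinearMap (LinearMap.mulRight ℝ A)
  have hf'int : IntegrableOn (fun s : ℝ => NormedSpace.exp (s • A) * A) (Set.Ioi (0:ℝ)) := by
    have h := R.integrable_comp hIoiInt
    exact h
  have htend : Filter.Tendsto (fun s : ℝ => NormedSpace.exp (s • A))
      Filter.atTop (nhds 0) := by
    have hg0 : Filter.Tendsto (fun s : ℝ => C * Real.exp (-δ * s)) Filter.atTop (nhds 0) := by
      have h1 : Filter.Tendsto (fun s : ℝ => Real.exp (-(δ * s))) Filter.atTop (nhds 0) :=
        Real.tendsto_exp_neg_atTop_nhds_zero.comp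
          (Filter.Tendsto.const_mul_atTop hδ Filter.tendsto_id)
      have h2 := h1.const_mul C
      simpa [neg_mul, mul_zero] using h2
    refine squeeze_zero_norm' ?_ hg0
    filter_upwards [Filter.eventually_ge_atTop (0:ℝ)] with s hs
    exact hb s hs
  have hFTC := integral_Ioi_of_hasDerivAt_of_tendsto (a := (0:ℝ))
      (f := fun s : ℝ => NormedSpace.exp (s • A))
      (f' := fun s : ℝ => NormedSpace.exp (s • A) * A)
      (hcont.continuousWithinAt) (fun x _ => aux_exp_hasDerivAt A x) hf'int htend
  have hf0 : NormedSpace.exp ((0:ℝ) • A) = 1 := by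
    rw [zero_smul, NormedSpace.exp_zero]
  have hFTC' : ∫ s in Set.Ioi (0:ℝ), NormedSpace.exp (s • A) * A = 0 - 1 := by
    simpa [hf0] using hFTC
  have hcomm : ∫ s in Set.Ioi (0:ℝ), NormedSpace.exp (s • A) * A
      = (∫ s in Set.Ioi (0:ℝ), NormedSpace.exp (s • A)) * A := by
    have h := R.integral_comp_comm hIoiInt
    exact h
  have hIA : (∫ s in Set.Ioi (0:ℝ), NormedSpace.exp (s • A)) * A = -1 := by
    rw [← hcomm, hFTC']
    simp
  rw [MeasureTheory.integral_Ici_eq_integral_Ioi]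
  have hinv : A * A⁻¹ = 1 := Matrix.mul_nonsing_inv A (isUnit_iff_ne_zero.mpr hdet)
  calc (∫ s in Set.Ioi (0:ℝ), NormedSpace.exp (s • A))
      = (∫ s in Set.Ioi (0:ℝ), NormedSpace.exp (s • A)) * (A * A⁻¹) := by rw [hinv, mul_one]
    _ = ((∫ s in Set.Ioi (0:ℝ), NormedSpace.exp (s • A)) * A) * A⁻¹ := by rw [mul_assoc]
    _ = -A⁻¹ := by rw [hIA]; simp
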